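/- arXiv:2409.19730 — 5 statements merged into one kernel-verified Lean document; each statement's English description precedes it below -/
import Mathlib

section
/- Let A be a real n×n matrix all of whose (complex) eigenvalues have negative real part, let d ≥ 1, and let c_1 ∈ ℝ^n, c_2 ∈ ℝ^{n^2}, …, c_d ∈ ℝ^{n^d} (with the convention c_i = 0 for i > d). For k = 2,…,2d let w_k ∈ ℝ^{n^k} satisfy L_k(A^⊤) w_k = − Σ_{i=1}^{k−1} c_i ⊗ c_{k−i}, and define E_o : ℝ^n → ℝ by E_o(x) = (1/2) Σ_{k=2}^{2d} w_k^⊤ x^{⊗k}. Then E_o solves the Lyapunov PDE: for every x ∈ ℝ^n, (∇E_o(x))^⊤ (A x) + (1/2) ( Σ_{j=1}^d c_j^⊤ x^{⊗j} )² = 0, where ∇E_o(x) is the gradient of E_o at x. -/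
open Matrix MeasureTheory
open scoped BigOperators Nat RealInnerProductSpace

noncomputable section

namespace LPO

/-- Multi-index representation of an index of `ℝ^{n^k}`. -/
def mi {n k : ℕ} (m : Fin (n ^ k)) : Fin k → Fin n :=
  finFunctionFinEquiv.symm m

/-- The Kronecker product `u₁ ⊗ ⋯ ⊗ u_k ∈ ℝ^{n^k}` of `k` vectors in `ℝ^n`. -/
def vkronFam (n k : ℕ) (u : Fin k → Fin n → ℝ) : Fin (n ^ k) → ℝ :=
  fun m => ∏ i, u i (mi m i)

/-- The `k`-fold Kronecker power `x ⊗ ⋯ ⊗ x ∈ ℝ^{n^k}` of `x ∈ ℝ^n`. -/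
def kpow {n : ℕ} (x : Fin n → ℝ) (k : ℕ) : Fin (n ^ k) → ℝ :=
  fun m => ∏ i, x (mi m i)

/-- Kronecker product `ℝ^{n^a} × ℝ^{n^b} → ℝ^{n^(a+b)}`. -/
def vkron {n a b : ℕ} (u : Fin (n ^ a) → ℝ) (v : Fin (n ^ b) → ℝ) :
    Fin (n ^ (a + b)) → ℝ :=
  fun m =>
    u (finFunctionFinEquiv fun i => mi m (Fin.castAdd b i)) *
      v (finFunctionFinEquiv fun i => mi m (Fin.natAdd a i))

/-- Cast `ℝ^{n^a} → ℝ^{n^b}` along a proof that `a = b`. -/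
def vcast {n a b : ℕ} (h : a = b) (v : Fin (n ^ a) → ℝ) : Fin (n ^ b) → ℝ :=
  fun m => v (Fin.cast (by rw [h]) m)

/-- Kronecker product of `k` (square, equally sized) matrices. -/
def mkron {n : ℕ} (k : ℕ) (M : Fin k → Matrix (Fin n) (Fin n) ℝ) :
    Matrix (Fin (n ^ k)) (Fin (n ^ k)) ℝ :=
  Matrix.of fun p q => ∏ i, M i (mi p i) (mi q i)

/-- `k`-fold Kronecker power of an `n × r` matrix. -/
def mkronRect {n r : ℕ} (k : ℕ) (Q : Matrix (Fin n) (Fin r) ℝ) :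
    Matrix (Fin (n ^ k)) (Fin (r ^ k)) ℝ :=
  Matrix.of fun p q => ∏ i, Q (mi p i) (mi q i)

/-- `L_k(A) = Σ_{j=1}^k I ⊗ ⋯ ⊗ I ⊗ A ⊗ I ⊗ ⋯ ⊗ I` with `A` in the `j`-th slot. -/
def LkMat {n : ℕ} (A : Matrix (Fin n) (Fin n) ℝ) (k : ℕ) :
    Matrix (Fin (n ^ k)) (Fin (n ^ k)) ℝ :=
  ∑ j : Fin k, mkron k fun i => if i = j then A else 1

/-- All complex eigenvalues of the real matrix `A` have negative real part. -/
def StableMat {n : ℕ} (A : Matrix (Fin n) (Fin n) ℝ) : Prop :=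
  ∀ z : ℂ, (A.map (algebraMap ℝ ℂ)).charpoly.IsRoot z → z.re < 0

/-- The mode-permutation operator `P_τ` on `ℝ^{n^k}`, characterized by
`P_τ (u₁ ⊗ ⋯ ⊗ u_k) = u_{τ(1)} ⊗ ⋯ ⊗ u_{τ(k)}`. -/
def permVec {n k : ℕ} (τ : Equiv.Perm (Fin k)) (w : Fin (n ^ k) → ℝ) :
    Fin (n ^ k) → ℝ :=
  fun m => w (finFunctionFinEquiv (mi m ∘ ⇑τ⁻¹))

/-- `w ∈ ℝ^{n^k}` has Kronecker (CP) rank at most `R`. -/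
def KrankLe {n k : ℕ} (w : Fin (n ^ k) → ℝ) (R : ℕ) : Prop :=
  ∃ u : Fin R → Fin k → Fin n → ℝ, w = ∑ j, vkronFam n k (u j)

/-- The right-hand side `C_k = -Σ_{i=1}^{k-1} c_i ⊗ c_{k-i}` of the linear system for `w_k`. -/
def Cvec {n : ℕ} (c : (i : ℕ) → Fin (n ^ i) → ℝ) (k : ℕ) : Fin (n ^ k) → ℝ :=
  -(∑ i ∈ (Finset.Icc 1 (k - 1)).attach,
      vcast (show i.1 + (k - i.1) = k from by
          have := Finset.mem_Icc.mp i.2; omega)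
        (vkron (c i.1) (c (k - i.1))))

/-- Euclidean norm on `ℝ^N`. -/
def enorm {N : ℕ} (v : Fin N → ℝ) : ℝ := Real.sqrt (v ⬝ᵥ v)

/-- Spectral norm of a complex matrix: the operator norm of the induced map between
Euclidean spaces. -/
def specNorm {m : ℕ} (M : Matrix (Fin m) (Fin m) ℂ) : ℝ :=
  ‖LinearMap.toContinuousLinearMap (Matrix.toEuclideanLin M)‖

/-- Euclidean ball of radius `L` in `ℝ^n`. -/
def eball (n : ℕ) (L : ℝ) : Set (Fin n → ℝ) := {x | x ⬝ᵥ x ≤ L ^ 2}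

/-- Square matricization `ℝ^{n^{2κ}} → ℝ^{n^κ × n^κ}`, characterized by
`(u₁⊗⋯⊗u_κ)ᵀ W (v₁⊗⋯⊗v_κ) = wᵀ (u₁⊗⋯⊗u_κ⊗v₁⊗⋯⊗v_κ)`. -/
def sqMatz {n κ : ℕ} (w : Fin (n ^ (2 * κ)) → ℝ) :
    Matrix (Fin (n ^ κ)) (Fin (n ^ κ)) ℝ :=
  Matrix.of fun p q =>
    w (Fin.cast (show n ^ (κ + κ) = n ^ (2 * κ) from by rw [two_mul])
        (finFunctionFinEquiv (Fin.append (mi p) (mi q))))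

end LPO

namespace LPO

/-- The low-rank right-hand side `C̃_k` (Lemma on minimal Kronecker rank). -/
def Ctil {n : ℕ} (c : (i : ℕ) → Fin (n ^ i) → ℝ) (k : ℕ) : Fin (n ^ k) → ℝ :=
  if hk : k % 2 = 1 then
    (2 : ℝ) • ∑ i ∈ (Finset.Icc 1 (k / 2)).attach,
      vcast (show i.1 + (k - i.1) = k from by
          have := Finset.mem_Icc.mp i.2; omega)
        (vkron (c i.1) (c (k - i.1)))
  else
    vcast (show k / 2 + k / 2 = k from by omega)
        (vkron (c (k / 2)) (c (k / 2)))
      + (2 : ℝ) • ∑ i ∈ (Finset.Icc 1 (k / 2 - 1)).attach,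
          vcast (show i.1 + (k - i.1) = k from by
              have := Finset.mem_Icc.mp i.2; omega)
            (vkron (c i.1) (c (k - i.1)))

/-- Quadrature step size `h_st = π / √ℓ`. -/
def quadStep (ℓ : ℕ) : ℝ := Real.pi / Real.sqrt ℓ

/-- Quadrature node `α_i`. -/
def quadNode (k : ℕ) (lmin : ℝ) (ℓ : ℕ) (i : ℤ) : ℝ :=
  Real.log (Real.exp (i * quadStep ℓ) +
      Real.sqrt (1 + Real.exp (2 * i * quadStep ℓ))) / (k * lmin)

/-- Quadrature weight `ω_i`. -/
def quadWeight (k : ℕ) (lmin : ℝ) (ℓ : ℕ) (i : ℤ) : ℝ :=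
  quadStep ℓ / (Real.sqrt (1 + Real.exp (-2 * i * quadStep ℓ)) * (k * lmin))

/-- The quadrature-based approximation
`x_ℓ = -Σ_{i=-ℓ}^{ℓ} ω_i (exp(α_i A) ⊗ ⋯ ⊗ exp(α_i A)) b`. -/
def quadApprox {n : ℕ} (A : Matrix (Fin n) (Fin n) ℝ) (k : ℕ) (lmin : ℝ) (ℓ : ℕ)
    (b : Fin (n ^ k) → ℝ) : Fin (n ^ k) → ℝ :=
  -(∑ i ∈ Finset.Icc (-(ℓ : ℤ)) (ℓ : ℤ),
      quadWeight k lmin ℓ i •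
        (mkron k (fun _ => NormedSpace.exp (quadNode k lmin ℓ i • A)) *ᵥ b))

end LPO

namespace LPO

section Aux

variable {n : ℕ}

lemma mi_finFunctionFinEquiv {k : ℕ} (g : Fin k → Fin n) :
    mi (n := n) (finFunctionFinEquiv g) = g := by
  simp [mi]

lemma sum_mi {k : ℕ} (F : (Fin k → Fin n) → ℝ) :
    ∑ m : Fin (n ^ k), F (mi m) = ∑ g : Fin k → Fin n, F g := by
  rw [← Equiv.sum_comp finFunctionFinEquiv (fun m : Fin (n ^ k) => F (mi m))]
  simp [mi_finFunctionFinEquiv]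

lemma sum_dot {N : ℕ} {ι : Type*} (s : Finset ι) (f : ι → Fin N → ℝ) (v : Fin N → ℝ) :
    (∑ j ∈ s, f j) ⬝ᵥ v = ∑ j ∈ s, f j ⬝ᵥ v := by
  simp only [dotProduct, Finset.sum_apply, Finset.sum_mul]
  exact Finset.sum_comm

lemma sum_mulVec' {N : ℕ} {ι : Type*} (s : Finset ι) (M : ι → Matrix (Fin N) (Fin N) ℝ)
    (v : Fin N → ℝ) : (∑ j ∈ s, M j) *ᵥ v = ∑ j ∈ s, M j *ᵥ v := by
  funext p
  simp only [Matrix.mulVec, dotProduct, Finset.sum_apply, Matrix.sum_apply,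
    Finset.sum_mul]
  exact Finset.sum_comm

lemma mkron_mulVec_kpow {k : ℕ} (M : Fin k → Matrix (Fin n) (Fin n) ℝ) (x : Fin n → ℝ)
    (p : Fin (n ^ k)) :
    (mkron k M *ᵥ kpow x k) p = ∏ i, (M i *ᵥ x) (mi p i) := by
  have h1 : ∀ i : Fin k, (M i *ᵥ x) (mi p i) = ∑ t, M i (mi p i) t * x t := fun i => rfl
  have h2 : (mkron k M *ᵥ kpow x k) p
      = ∑ m : Fin (n ^ k), ∏ i, (M i (mi p i) (mi m i) * x (mi m i)) := by
    simp [Matrix.mulVec, dotProduct, mkron, kpow, Finset.prod_mul_distrib]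
  rw [h2, sum_mi (fun g : Fin k → Fin n => ∏ i, (M i (mi p i) (g i) * x (g i)))]
  simp only [h1]
  rw [Finset.prod_univ_sum]
  simp only [Fintype.piFinset_univ]

lemma dot_kpow_sum {a : ℕ} (u : Fin (n ^ a) → ℝ) (x : Fin n → ℝ) :
    u ⬝ᵥ kpow x a = ∑ g : Fin a → Fin n, u (finFunctionFinEquiv g) * ∏ i, x (g i) := by
  rw [← sum_mi (fun g : Fin a → Fin n => u (finFunctionFinEquiv g) * ∏ i, x (g i))]
  simp [dotProduct, kpow, mi]

lemma vkron_dot_kpow {a b : ℕ} (u : Fin (n ^ a) → ℝ) (v : Fin (n ^ b) → ℝ) (x : Fin n → ℝ) :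
    vkron u v ⬝ᵥ kpow x (a + b) = (u ⬝ᵥ kpow x a) * (v ⬝ᵥ kpow x b) := by
  classical
  set E : ((Fin a → Fin n) × (Fin b → Fin n)) ≃ (Fin (a + b) → Fin n) :=
    (Equiv.sumArrowEquivProdArrow (Fin a) (Fin b) (Fin n)).symm.trans
      (Equiv.arrowCongr finSumFinEquiv (Equiv.refl (Fin n))) with hE
  have hEc : ∀ (g : (Fin a → Fin n) × (Fin b → Fin n)) (i : Fin a),
      E g (Fin.castAdd b i) = g.1 i := by
    intro g i
    simp [hE, Equiv.sumArrowEquivProdArrow, Equiv.arrowCongr,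
      finSumFinEquiv_symm_apply_castAdd]
  have hEn : ∀ (g : (Fin a → Fin n) × (Fin b → Fin n)) (i : Fin b),
      E g (Fin.natAdd a i) = g.2 i := by
    intro g i
    simp [hE, Equiv.sumArrowEquivProdArrow, Equiv.arrowCongr,
      finSumFinEquiv_symm_apply_natAdd]
  have h1 : vkron u v ⬝ᵥ kpow x (a + b)
      = ∑ g : Fin (a + b) → Fin n,
          u (finFunctionFinEquiv fun i => g (Fin.castAdd b i)) *
            v (finFunctionFinEquiv fun i => g (Fin.natAdd a i)) * ∏ i, x (g i) := by
    rw [← sum_mi (fun g : Fin (a + b) → Fin n =>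
      u (finFunctionFinEquiv fun i => g (Fin.castAdd b i)) *
        v (finFunctionFinEquiv fun i => g (Fin.natAdd a i)) * ∏ i, x (g i))]
    rfl
  rw [h1, ← Equiv.sum_comp E, Fintype.sum_prod_type, dot_kpow_sum, dot_kpow_sum,
    Finset.sum_mul_sum]
  refine Finset.sum_congr rfl fun g1 _ => Finset.sum_congr rfl fun g2 _ => ?_
  have hpa : (fun i => E (g1, g2) (Fin.castAdd b i)) = g1 := funext (hEc (g1, g2))
  have hpb : (fun i => E (g1, g2) (Fin.natAdd a i)) = g2 := funext (hEn (g1, g2))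
  rw [hpa, hpb, Fin.prod_univ_add (f := fun i => x (E (g1, g2) i))]
  simp only [hEc (g1, g2), hEn (g1, g2)]
  ring

lemma vcast_dot_kpow {a b : ℕ} (h : a = b) (v : Fin (n ^ a) → ℝ) (x : Fin n → ℝ) :
    vcast (n := n) h v ⬝ᵥ kpow x b = v ⬝ᵥ kpow x a := by
  subst h
  rfl

lemma Cvec_dot {k : ℕ} (c : (i : ℕ) → Fin (n ^ i) → ℝ) (x : Fin n → ℝ) :
    Cvec c k ⬝ᵥ kpow x k
      = -∑ i ∈ Finset.Icc 1 (k - 1),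
          (c i ⬝ᵥ kpow x i) * (c (k - i) ⬝ᵥ kpow x (k - i)) := by
  unfold Cvec
  rw [neg_dotProduct, ← Finset.sum_attach (Finset.Icc 1 (k - 1))
    (fun i => (c i ⬝ᵥ kpow x i) * (c (k - i) ⬝ᵥ kpow x (k - i))), neg_inj, sum_dot]
  refine Finset.sum_congr rfl fun i _ => ?_
  rw [vcast_dot_kpow, vkron_dot_kpow]

lemma mkron_transpose {k : ℕ} (M : Fin k → Matrix (Fin n) (Fin n) ℝ) :
    (mkron k M)ᵀ = mkron k fun i => (M i)ᵀ := by
  ext p q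
  simp [mkron, Matrix.transpose_apply]

lemma mkron_slot_mulVec_kpow {k : ℕ} (A : Matrix (Fin n) (Fin n) ℝ) (x : Fin n → ℝ)
    (j : Fin k) (p : Fin (n ^ k)) :
    (mkron k (fun i => if i = j then A else 1) *ᵥ kpow x k) p
      = (∏ i ∈ Finset.univ.erase j, x (mi p i)) * (A *ᵥ x) (mi p j) := by
  rw [mkron_mulVec_kpow,
    ← Finset.mul_prod_erase Finset.univ (fun i => ((if i = j then A else 1) *ᵥ x) (mi p i))
      (Finset.mem_univ j), mul_comm]
  congr 1
  · refine Finset.prod_congr rfl fun i hi => ?_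
    rw [if_neg (Finset.mem_erase.mp hi).1, Matrix.one_mulVec]
  · rw [if_pos rfl]

lemma LkMat_mulVec_dot {k : ℕ} (A : Matrix (Fin n) (Fin n) ℝ) (wk : Fin (n ^ k) → ℝ)
    (x : Fin n → ℝ) :
    (LkMat Aᵀ k *ᵥ wk) ⬝ᵥ kpow x k
      = ∑ m, wk m * ∑ j : Fin k,
          (∏ i ∈ Finset.univ.erase j, x (mi m i)) * (A *ᵥ x) (mi m j) := by
  classical
  unfold LkMat
  rw [sum_mulVec', sum_dot]
  have hj : ∀ j : Fin k,
      ((mkron k fun i => if i = j then Aᵀ else 1) *ᵥ wk) ⬝ᵥ kpow x k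
        = ∑ m, wk m * ((∏ i ∈ Finset.univ.erase j, x (mi m i)) * (A *ᵥ x) (mi m j)) := by
    intro j
    have ht : (mkron k fun i => if i = j then Aᵀ else 1)
        = (mkron k fun i => if i = j then A else 1)ᵀ := by
      rw [mkron_transpose]
      unfold mkron
      congr 1
      funext p' q'
      refine Finset.prod_congr rfl fun i _ => ?_
      by_cases h : i = j <;> simp [h, Matrix.one_apply, eq_comm]
    rw [ht, Matrix.mulVec_transpose, ← Matrix.dotProduct_mulVec]
    refine Finset.sum_congr rfl fun m _ => ?_
    rw [mkron_slot_mulVec_kpow]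
  simp only [hj]
  rw [Finset.sum_comm]
  simp [Finset.mul_sum]

lemma conv_square {d : ℕ} (f : ℕ → ℝ) (hf : ∀ i, d < i → f i = 0) :
    ∑ k ∈ Finset.Icc 2 (2 * d), ∑ i ∈ Finset.Icc 1 (k - 1), f i * f (k - i)
      = (∑ j ∈ Finset.Icc 1 d, f j) ^ 2 := by
  classical
  rw [sq, Finset.sum_mul_sum, ← Finset.sum_product', Finset.sum_sigma']
  rw [← Finset.sum_filter_of_ne
    (p := fun a : Σ _ : ℕ, ℕ => a.2 ≤ d ∧ a.1 - a.2 ≤ d) ?_]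
  · refine Finset.sum_nbij' (fun a => (a.2, a.1 - a.2)) (fun p : ℕ × ℕ => (⟨p.1 + p.2, p.1⟩ : Σ _ : ℕ, ℕ))
      ?_ ?_ ?_ ?_ ?_
    · rintro ⟨k, i⟩ ha
      simp only [Finset.mem_filter, Finset.mem_sigma, Finset.mem_Icc] at ha
      simp only [Finset.mem_product, Finset.mem_Icc]
      omega
    · rintro ⟨i, j⟩ hp
      simp only [Finset.mem_product, Finset.mem_Icc] at hp
      simp only [Finset.mem_filter, Finset.mem_sigma, Finset.mem_Icc]
      omega
    · rintro ⟨k, i⟩ ha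
      simp only [Finset.mem_filter, Finset.mem_sigma, Finset.mem_Icc] at ha
      have hik : i + (k - i) = k := by omega
      simp only [hik]
    · rintro ⟨i, j⟩ hp
      simp only [Finset.mem_product, Finset.mem_Icc] at hp
      have h2 : i + j - i = j := by omega
      simp [h2]
    · rintro ⟨k, i⟩ _
      rfl
  · rintro ⟨k, i⟩ ha hne
    by_contra hcon
    rw [not_and_or] at hcon
    rcases hcon with h | h
    · exact hne (by rw [hf _ (lt_of_not_ge h), zero_mul])
    · exact hne (by rw [hf _ (lt_of_not_ge h), mul_zero])

end Aux

/-- The polynomial `E_o(x) = (1/2) Σ_{k=2}^{2d} w_kᵀ x^{⊗k}`, with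
`w_k` solving `L_k(Aᵀ) w_k = -Σ_{i=1}^{k-1} c_i ⊗ c_{k-i}`, solves the Lyapunov PDE
`(∇E_o(x))ᵀ (A x) + (1/2)(Σ_{j=1}^d c_jᵀ x^{⊗j})² = 0` (the gradient term being
the directional derivative of `E_o` at `x` in the direction `A x`). -/

theorem observability_energy_solves_lyapunov_pde
    {n d : ℕ} (hd : 1 ≤ d)
    (A : Matrix (Fin n) (Fin n) ℝ) (hA : StableMat A)
    (c : (i : ℕ) → Fin (n ^ i) → ℝ) (hc : ∀ i, d < i → c i = 0)
    (w : (k : ℕ) → Fin (n ^ k) → ℝ)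
    (hw : ∀ k ∈ Finset.Icc 2 (2 * d), LkMat Aᵀ k *ᵥ w k = Cvec c k) :
    ∀ x : Fin n → ℝ,
      fderiv ℝ
          (fun y : Fin n → ℝ =>
            (1 / 2) * ∑ k ∈ Finset.Icc 2 (2 * d), w k ⬝ᵥ kpow y k) x (A *ᵥ x)
        + (1 / 2) * (∑ j ∈ Finset.Icc 1 d, c j ⬝ᵥ kpow x j) ^ 2 = 0 := by
  classical
  intro x
  have hder : ∀ k : ℕ, HasFDerivAt (fun y : Fin n → ℝ => w k ⬝ᵥ kpow y k)
      (∑ m : Fin (n ^ k), w k m • ∑ j : Fin k,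
        (∏ i ∈ Finset.univ.erase j, x (mi m i)) •
          (ContinuousLinearMap.proj (mi m j) : (Fin n → ℝ) →L[ℝ] ℝ)) x := by
    intro k
    have h1 : ∀ m : Fin (n ^ k), HasFDerivAt (fun y : Fin n → ℝ => ∏ i, y (mi m i))
        (∑ j : Fin k, (∏ i ∈ Finset.univ.erase j, x (mi m i)) •
          (ContinuousLinearMap.proj (mi m j) : (Fin n → ℝ) →L[ℝ] ℝ)) x :=
      fun m => HasFDerivAt.finset_prod fun j _ =>
        (ContinuousLinearMap.proj (mi m j) : (Fin n → ℝ) →L[ℝ] ℝ).hasFDerivAt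
    exact HasFDerivAt.fun_sum fun m _ => (h1 m).const_mul (w k m)
  have hall : HasFDerivAt
      (fun y : Fin n → ℝ => (1 / 2) * ∑ k ∈ Finset.Icc 2 (2 * d), w k ⬝ᵥ kpow y k)
      ((1 / 2 : ℝ) • ∑ k ∈ Finset.Icc 2 (2 * d), ∑ m : Fin (n ^ k), w k m • ∑ j : Fin k,
        (∏ i ∈ Finset.univ.erase j, x (mi m i)) •
          (ContinuousLinearMap.proj (mi m j) : (Fin n → ℝ) →L[ℝ] ℝ)) x :=
    (HasFDerivAt.fun_sum fun k _ => hder k).const_mul (1 / 2)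
  rw [hall.fderiv]
  have hval : ((1 / 2 : ℝ) • ∑ k ∈ Finset.Icc 2 (2 * d), ∑ m : Fin (n ^ k),
        w k m • ∑ j : Fin k, (∏ i ∈ Finset.univ.erase j, x (mi m i)) •
          (ContinuousLinearMap.proj (mi m j) : (Fin n → ℝ) →L[ℝ] ℝ)) (A *ᵥ x)
      = (1 / 2) * ∑ k ∈ Finset.Icc 2 (2 * d), ∑ m : Fin (n ^ k), w k m * ∑ j : Fin k,
          (∏ i ∈ Finset.univ.erase j, x (mi m i)) * (A *ᵥ x) (mi m j) := by
    simp [ContinuousLinearMap.sum_apply, ContinuousLinearMap.smul_apply,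
      ContinuousLinearMap.proj_apply, smul_eq_mul]
  rw [hval]
  have hkey : ∀ k ∈ Finset.Icc 2 (2 * d),
      (∑ m : Fin (n ^ k), w k m * ∑ j : Fin k,
          (∏ i ∈ Finset.univ.erase j, x (mi m i)) * (A *ᵥ x) (mi m j))
        = -∑ i ∈ Finset.Icc 1 (k - 1),
            (c i ⬝ᵥ kpow x i) * (c (k - i) ⬝ᵥ kpow x (k - i)) := by
    intro k hk
    rw [← LkMat_mulVec_dot, hw k hk, Cvec_dot]
  rw [Finset.sum_congr rfl hkey, Finset.sum_neg_distrib]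
  have hsq := conv_square (d := d) (fun j => c j ⬝ᵥ kpow x j) (fun i hi => by simp [hc i hi])
  linarith [hsq]

end LPO
end
end

section
/- Let A be a real n×n matrix all of whose (complex) eigenvalues have negative real part, and let k ≥ 1. Then the matrix-valued integral ∫₀^∞ exp(tA) ⊗ ⋯ ⊗ exp(tA) dt (k Kronecker factors) converges, and L_k(A)^{-1} = − ∫₀^∞ exp(tA) ⊗ ⋯ ⊗ exp(tA) dt. -/
open Matrix MeasureTheory
open scoped BigOperators Nat RealInnerProductSpace

noncomputable section

namespace LPO

open scoped NNReal ENNReal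
open scoped Function

variable {n k : ℕ}

lemma mi_symm (f : Fin k → Fin n) : mi (n := n) (finFunctionFinEquiv f) = f :=
  Equiv.symm_apply_apply _ _

lemma mi_injective : Function.Injective (mi (n := n) (k := k)) :=
  (finFunctionFinEquiv.symm.injective)

lemma mkron_apply (M : Fin k → Matrix (Fin n) (Fin n) ℝ) (p q : Fin (n ^ k)) :
    mkron k M p q = ∏ i, M i (mi p i) (mi q i) := rfl

lemma mkron_mul (M N : Fin k → Matrix (Fin n) (Fin n) ℝ) :
    mkron k M * mkron k N = mkron k (fun i => M i * N i) := by
  ext p q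
  rw [Matrix.mul_apply]
  rw [← Equiv.sum_comp (finFunctionFinEquiv : (Fin k → Fin n) ≃ Fin (n ^ k))]
  simp only [mkron_apply, mi_symm, Matrix.mul_apply]
  rw [Finset.prod_univ_sum, Fintype.piFinset_univ]
  exact Finset.sum_congr rfl fun g _ => (Finset.prod_mul_distrib).symm

lemma mkron_one : mkron k (fun _ => (1 : Matrix (Fin n) (Fin n) ℝ)) = 1 := by
  ext p q
  rw [mkron_apply, Matrix.one_apply]
  by_cases h : p = q
  · subst h; simp [Matrix.one_apply]
  · have : ∃ i, mi p i ≠ mi q i := by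
      by_contra hc
      push_neg at hc
      exact h (mi_injective (funext hc))
    obtain ⟨i, hi⟩ := this
    rw [if_neg h]
    exact Finset.prod_eq_zero (Finset.mem_univ i) (by simp [Matrix.one_apply, hi])

lemma mkron_slot_apply (j : Fin k) (A : Matrix (Fin n) (Fin n) ℝ) (p q : Fin (n ^ k)) :
    mkron k (fun i => if i = j then A else 1) p q =
      A (mi p j) (mi q j) *
        ∏ i ∈ Finset.univ.erase j, (1 : Matrix (Fin n) (Fin n) ℝ) (mi p i) (mi q i) := by
  rw [mkron_apply, ← Finset.mul_prod_erase Finset.univ _ (Finset.mem_univ j)]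
  simp only [if_pos rfl]
  congr 1
  refine Finset.prod_congr rfl fun i hi => ?_
  rw [if_neg (Finset.ne_of_mem_erase hi)]

lemma mkron_slot_smul (j : Fin k) (c : ℝ) (A : Matrix (Fin n) (Fin n) ℝ) :
    mkron k (fun i => if i = j then c • A else 1) =
      c • mkron k (fun i => if i = j then A else 1) := by
  ext p q
  simp only [mkron_slot_apply, Matrix.smul_apply, smul_eq_mul]
  ring

/-- The `j`-th slot embedding as an `ℝ`-algebra homomorphism. -/
def emb (n k : ℕ) (j : Fin k) :
    Matrix (Fin n) (Fin n) ℝ →ₐ[ℝ] Matrix (Fin (n ^ k)) (Fin (n ^ k)) ℝ where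
  toFun A := mkron k (fun i => if i = j then A else 1)
  map_one' := by
    show mkron k _ = 1
    simpa using mkron_one
  map_mul' A B := by
    show mkron k _ = mkron k _ * mkron k _
    rw [mkron_mul]
    have key : (fun i => (if i = j then A else 1) * (if i = j then B else 1)) =
        (fun i => if i = j then A * B else 1) := by
      funext i; by_cases h : i = j <;> simp [h]
    rw [key]
  map_zero' := by
    show mkron k _ = 0
    ext p q
    rw [mkron_slot_apply]
    simp
  map_add' A B := by
    show mkron k _ = mkron k _ + mkron k _
    ext p q
    simp only [mkron_slot_apply, Matrix.add_apply]
    ring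
  commutes' r := by
    show mkron k _ = _
    have h0 : (fun i => if i = j then algebraMap ℝ (Matrix (Fin n) (Fin n) ℝ) r else 1) =
        fun i => if i = j then r • (1 : Matrix (Fin n) (Fin n) ℝ) else 1 := by
      rw [Algebra.algebraMap_eq_smul_one]
    rw [h0, mkron_slot_smul]
    have h1 : (fun i : Fin k => if i = j then (1 : Matrix (Fin n) (Fin n) ℝ) else 1) =
        fun _ => (1 : Matrix (Fin n) (Fin n) ℝ) := by
      funext i; rw [ite_self]
    rw [h1, mkron_one, Algebra.algebraMap_eq_smul_one]

lemma emb_apply (j : Fin k) (A : Matrix (Fin n) (Fin n) ℝ) :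
    emb n k j A = mkron k (fun i => if i = j then A else 1) := rfl

lemma LkMat_eq (A : Matrix (Fin n) (Fin n) ℝ) : LkMat A k = ∑ j, emb n k j A := rfl

lemma emb_commute {j j' : Fin k} (X Y : Matrix (Fin n) (Fin n) ℝ) (h : j ≠ j') :
    Commute (emb n k j X) (emb n k j' Y) := by
  have key : (fun i => (if i = j then X else 1) * (if i = j' then Y else 1)) =
      (fun i => (if i = j' then Y else 1) * (if i = j then X else 1)) := by
    funext i
    by_cases h1 : i = j <;> by_cases h2 : i = j' <;> simp_all
  unfold Commute SemiconjBy
  rw [emb_apply, emb_apply, mkron_mul, mkron_mul, key]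

lemma noncommProd_emb (E : Matrix (Fin n) (Fin n) ℝ) (s : Finset (Fin k))
    (h : (s : Set (Fin k)).Pairwise (Commute on fun j => emb n k j E)) :
    s.noncommProd (fun j => emb n k j E) h = mkron k (fun i => if i ∈ s then E else 1) := by
  classical
  induction s using Finset.induction with
  | empty =>
    rw [Finset.noncommProd_empty]
    have : (fun i : Fin k => if i ∈ (∅ : Finset (Fin k)) then E else 1) =
        fun _ => (1 : Matrix (Fin n) (Fin n) ℝ) := by
      funext i; simp
    rw [this, mkron_one]
  | @insert j s hj ih =>
    rw [Finset.noncommProd_insert_of_notMem _ _ _ _ hj, ih _, emb_apply, mkron_mul]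
    have key : (fun i => (if i = j then E else 1) * (if i ∈ s then E else 1)) =
        (fun i => if i ∈ insert j s then E else 1) := by
      funext i
      by_cases h1 : i = j
      · subst h1; simp [hj]
      · by_cases h2 : i ∈ s <;> simp [h1, h2]
    rw [key]

theorem exp_smul_LkMat (A : Matrix (Fin n) (Fin n) ℝ) (t : ℝ) :
    NormedSpace.exp (t • LkMat A k) = mkron k (fun _ => NormedSpace.exp (t • A)) := by
  have h1 : t • LkMat A k = ∑ j : Fin k, emb n k j (t • A) := by
    rw [LkMat_eq, Finset.smul_sum]
    exact Finset.sum_congr rfl fun j _ => (map_smul (emb n k j) t A).symm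
  have hcomm : ((Finset.univ : Finset (Fin k)) : Set (Fin k)).Pairwise
      (Commute on fun j => emb n k j (t • A)) := fun j _ j' _ hne => emb_commute _ _ hne
  rw [h1, Matrix.exp_sum_of_commute Finset.univ _ hcomm]
  have hexp : ∀ j : Fin k,
      NormedSpace.exp (emb n k j (t • A)) = emb n k j (NormedSpace.exp (t • A)) := by
    intro j
    letI : NormedRing (Matrix (Fin n) (Fin n) ℝ) := Matrix.linftyOpNormedRing
    letI : NormedAlgebra ℝ (Matrix (Fin n) (Fin n) ℝ) := Matrix.linftyOpNormedAlgebra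
    letI : NormedRing (Matrix (Fin (n ^ k)) (Fin (n ^ k)) ℝ) := Matrix.linftyOpNormedRing
    letI : NormedAlgebra ℝ (Matrix (Fin (n ^ k)) (Fin (n ^ k)) ℝ) := Matrix.linftyOpNormedAlgebra
    letI : NormedAlgebra ℚ (Matrix (Fin n) (Fin n) ℝ) := Matrix.linftyOpNormedAlgebra
    letI : NormedAlgebra ℚ (Matrix (Fin (n ^ k)) (Fin (n ^ k)) ℝ) := Matrix.linftyOpNormedAlgebra
    have hcont : Continuous (emb n k j) :=
      (emb n k j).toLinearMap.continuous_of_finiteDimensional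
    exact (NormedSpace.map_exp (emb n k j) hcont (t • A)).symm
  have hcomm2 : ((Finset.univ : Finset (Fin k)) : Set (Fin k)).Pairwise
      (Commute on fun j => NormedSpace.exp (emb n k j (t • A))) := by
    intro j _ j' _ hne
    show Commute (NormedSpace.exp ((emb n k j) (t • A))) (NormedSpace.exp ((emb n k j') (t • A)))
    rw [hexp j, hexp j']
    exact emb_commute _ _ hne
  rw [Finset.noncommProd_congr rfl (fun j _ => hexp j) hcomm2]
  refine Eq.trans (noncommProd_emb (NormedSpace.exp (t • A)) Finset.univ _) ?_
  simp only [Finset.mem_univ, if_true]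



lemma charpoly_eval {N : ℕ} (M : Matrix (Fin N) (Fin N) ℂ) (μ : ℂ) :
    M.charpoly.eval μ = (μ • (1 : Matrix (Fin N) (Fin N) ℂ) - M).det := by
  rw [Matrix.charpoly, ← Polynomial.coe_evalRingHom, RingHom.map_det]
  congr 1
  ext i j
  by_cases h : i = j <;>
    simp [h, Matrix.charmatrix_apply, Matrix.one_apply, Matrix.diagonal_apply]

/-- mulVec by a fixed vector, as a linear map in the matrix argument. -/
def mulVecLeft {N : ℕ} (u : Fin N → ℂ) :
    Matrix (Fin N) (Fin N) ℂ →ₗ[ℂ] (Fin N → ℂ) where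
  toFun X := X.mulVec u
  map_add' X Y := Matrix.add_mulVec X Y u
  map_smul' c X := Matrix.smul_mulVec c X u

lemma pow_mulVec_eigen {N : ℕ} {M : Matrix (Fin N) (Fin N) ℂ} {μ : ℂ} {u : Fin N → ℂ}
    (h : M.mulVec u = μ • u) (m : ℕ) : (M ^ m).mulVec u = μ ^ m • u := by
  induction m with
  | zero => simp
  | succ m ih =>
      rw [pow_succ', pow_succ', ← Matrix.mulVec_mulVec, ih, Matrix.mulVec_smul, h,
        smul_smul, mul_comm]

lemma exp_mulVec_eigen {N : ℕ} {M : Matrix (Fin N) (Fin N) ℂ} {μ : ℂ} {u : Fin N → ℂ}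
    (h : M.mulVec u = μ • u) :
    (NormedSpace.exp M).mulVec u = Complex.exp μ • u := by
  letI : NormedRing (Matrix (Fin N) (Fin N) ℂ) := Matrix.linftyOpNormedRing
  letI : NormedAlgebra ℂ (Matrix (Fin N) (Fin N) ℂ) := Matrix.linftyOpNormedAlgebra
  have hL : Continuous (mulVecLeft u) := (mulVecLeft u).continuous_of_finiteDimensional
  let L : Matrix (Fin N) (Fin N) ℂ →L[ℂ] (Fin N → ℂ) := ⟨mulVecLeft u, hL⟩
  have hsum : Summable fun m : ℕ => (m !⁻¹ : ℂ) • M ^ m := NormedSpace.expSeries_summable' M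
  have h1 : (NormedSpace.exp M).mulVec u = ∑' m : ℕ, (m !⁻¹ : ℂ) • (M ^ m).mulVec u := by
    have := L.map_tsum hsum
    simpa [L, mulVecLeft, NormedSpace.exp_eq_tsum ℂ] using this
  rw [h1]
  have h2 : ∀ m : ℕ, (m !⁻¹ : ℂ) • (M ^ m).mulVec u = ((m !⁻¹ : ℂ) * μ ^ m) • u := by
    intro m; rw [pow_mulVec_eigen h, smul_smul]
  simp_rw [h2]
  rw [Summable.tsum_smul_const]
  · congr 1
    rw [Complex.exp_eq_exp_ℂ, NormedSpace.exp_eq_tsum ℂ]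
    simp [smul_eq_mul]
  · simpa [smul_eq_mul] using NormedSpace.expSeries_summable' (𝕂 := ℂ) μ

set_option maxHeartbeats 1000000 in
theorem spectrum_exp_subset {N : ℕ} (M : Matrix (Fin N) (Fin N) ℂ) {z : ℂ}
    (hz : z ∈ spectrum ℂ (NormedSpace.exp M)) :
    ∃ μ : ℂ, M.charpoly.IsRoot μ ∧ z = Complex.exp μ := by
  classical
  have h1 : ¬IsUnit (z • (1 : Matrix (Fin N) (Fin N) ℂ) - NormedSpace.exp M) := by
    rw [spectrum.mem_iff] at hz
    rwa [Algebra.algebraMap_eq_smul_one] at hz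
  have hdet : (z • (1 : Matrix (Fin N) (Fin N) ℂ) - NormedSpace.exp M).det = 0 := by
    by_contra h
    exact h1 ((Matrix.isUnit_iff_isUnit_det _).2 (isUnit_iff_ne_zero.2 h))
  obtain ⟨v, hv0, hv⟩ := Matrix.exists_mulVec_eq_zero_iff.2 hdet
  set E := NormedSpace.exp M with hE
  set W : Submodule ℂ (Fin N → ℂ) :=
    LinearMap.ker (z • (1 : Matrix (Fin N) (Fin N) ℂ) - E).mulVecLin with hW
  have hvW : v ∈ W := by
    simp only [hW, LinearMap.mem_ker, Matrix.mulVecLin_apply]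
    exact hv
  haveI : Nontrivial W := by
    refine nontrivial_of_ne ⟨v, hvW⟩ 0 ?_
    simp [Subtype.ext_iff, hv0]
  have hcomm : Commute M (z • (1 : Matrix (Fin N) (Fin N) ℂ) - E) := by
    have h2 : Commute M E := ((Commute.refl M).exp_right)
    exact ((Commute.one_right M).smul_right z).sub_right h2
  have hMW : ∀ x ∈ W, M.mulVec x ∈ W := by
    intro x hx
    simp only [hW, LinearMap.mem_ker, Matrix.mulVecLin_apply] at hx ⊢
    rw [Matrix.mulVec_mulVec, ← hcomm.eq, ← Matrix.mulVec_mulVec, hx, Matrix.mulVec_zero]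
  let g := (M.mulVecLin).restrict hMW
  obtain ⟨μ, hμ⟩ := Module.End.exists_eigenvalue g
  obtain ⟨w, hgw, hw0⟩ := hμ.exists_hasEigenvector
  have happly : g w = μ • w := Module.End.mem_eigenspace_iff.mp hgw
  have hwv : M.mulVec (w : Fin N → ℂ) = μ • (w : Fin N → ℂ) := by
    have h5 : (↑(g w) : Fin N → ℂ) = M.mulVecLin (↑w : Fin N → ℂ) :=
      LinearMap.restrict_coe_apply M.mulVecLin hMW w
    rw [happly] at h5
    rw [Matrix.mulVecLin_apply] at h5
    rw [← h5]
    rfl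
  have hw0' : (w : Fin N → ℂ) ≠ 0 := by simpa [Submodule.coe_eq_zero] using hw0
  refine ⟨μ, ?_, ?_⟩
  · rw [Polynomial.IsRoot, charpoly_eval]
    refine Matrix.exists_mulVec_eq_zero_iff.1 ⟨(w : Fin N → ℂ), hw0', ?_⟩
    rw [Matrix.sub_mulVec, Matrix.smul_mulVec, Matrix.one_mulVec, hwv, sub_self]
  · have h3 : E.mulVec (w : Fin N → ℂ) = Complex.exp μ • (w : Fin N → ℂ) :=
      exp_mulVec_eigen hwv
    have h4 : E.mulVec (w : Fin N → ℂ) = z • (w : Fin N → ℂ) := by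
      have hwW : (w : Fin N → ℂ) ∈ (W : Set (Fin N → ℂ)) := w.2
      simp only [hW, SetLike.mem_coe, LinearMap.mem_ker, Matrix.mulVecLin_apply] at hwW
      rw [Matrix.sub_mulVec, Matrix.smul_mulVec, Matrix.one_mulVec, sub_eq_zero] at hwW
      exact hwW.symm
    obtain ⟨i, hi⟩ := Function.ne_iff.1 hw0'
    have := congrFun (h3.symm.trans h4) i
    simp only [Pi.smul_apply, smul_eq_mul] at this
    exact (mul_left_injective₀ hi this).symm

lemma norm_exp_le_exp_norm {𝔸 : Type*} [NormedRing 𝔸] [NormedAlgebra ℝ 𝔸] [CompleteSpace 𝔸]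
    [NormOneClass 𝔸] (x : 𝔸) : ‖NormedSpace.exp x‖ ≤ Real.exp ‖x‖ := by
  rw [NormedSpace.exp_eq_tsum ℝ]
  refine (norm_tsum_le_tsum_norm (NormedSpace.norm_expSeries_summable' x)).trans ?_
  have hle : ∀ m : ℕ, ‖(m !⁻¹ : ℝ) • x ^ m‖ ≤ (m !⁻¹ : ℝ) * ‖x‖ ^ m := by
    intro m
    rw [norm_smul]
    have h1 : ‖(m !⁻¹ : ℝ)‖ = (m !⁻¹ : ℝ) := by
      rw [Real.norm_eq_abs, abs_of_nonneg]
      positivity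
    rw [h1]
    exact mul_le_mul_of_nonneg_left (norm_pow_le _ _) (by positivity)
  have hsum2 : Summable fun m : ℕ => (m !⁻¹ : ℝ) * ‖x‖ ^ m := by
    simpa [smul_eq_mul] using NormedSpace.expSeries_summable' (𝕂 := ℝ) ‖x‖
  refine (Summable.tsum_le_tsum hle (NormedSpace.norm_expSeries_summable' x) hsum2).trans_eq ?_
  rw [Real.exp_eq_exp_ℝ, NormedSpace.exp_eq_tsum ℝ]
  simp [smul_eq_mul]

/-- Decay of the entries of `exp (t • M)` for a complex matrix all of whose charpoly
roots have negative real part. -/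
theorem exp_entry_decay {N : ℕ} (M : Matrix (Fin N) (Fin N) ℂ)
    (hM : ∀ μ : ℂ, M.charpoly.IsRoot μ → μ.re < 0) :
    ∃ C : ℝ, 0 < C ∧ ∃ δ : ℝ, 0 < δ ∧ ∀ t : ℝ, 0 ≤ t → ∀ a b : Fin N,
      ‖(NormedSpace.exp (t • M)) a b‖ ≤ C * Real.exp (-δ * t) := by
  rcases Nat.eq_zero_or_pos N with hN | hN
  · subst hN
    exact ⟨1, one_pos, 1, one_pos, fun t _ a _ => a.elim0⟩
  haveI : Nonempty (Fin N) := ⟨⟨0, hN⟩⟩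
  letI : NormedRing (Matrix (Fin N) (Fin N) ℂ) := Matrix.linftyOpNormedRing
  letI : NormedAlgebra ℂ (Matrix (Fin N) (Fin N) ℂ) := Matrix.linftyOpNormedAlgebra
  letI : NormedAlgebra ℝ (Matrix (Fin N) (Fin N) ℂ) := Matrix.linftyOpNormedAlgebra
  letI : NormOneClass (Matrix (Fin N) (Fin N) ℂ) := Matrix.linfty_opNormOneClass
  letI : NormedAlgebra ℚ (Matrix (Fin N) (Fin N) ℂ) := Matrix.linftyOpNormedAlgebra
  set E := NormedSpace.exp M with hE
  -- entry ≤ norm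
  have hentry : ∀ (X : Matrix (Fin N) (Fin N) ℂ) (a b : Fin N), ‖X a b‖ ≤ ‖X‖ := by
    intro X a b
    have h1 : ‖X a b‖₊ ≤ ‖X‖₊ := by
      rw [Matrix.linfty_opNNNorm_def]
      refine le_trans ?_ (Finset.le_sup (Finset.mem_univ a))
      exact Finset.single_le_sum (f := fun j => ‖X a j‖₊) (fun _ _ => zero_le)
        (Finset.mem_univ b)
    exact h1
  -- spectral radius of E is < 1
  have hsr : spectralRadius ℂ E < 1 := by
    obtain ⟨z, hzmem, hz⟩ := spectrum.exists_nnnorm_eq_spectralRadius E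
    rw [← hz]
    obtain ⟨μ, hμroot, rfl⟩ := spectrum_exp_subset M hzmem
    have : ‖Complex.exp μ‖ < 1 := by
      rw [Complex.norm_exp]
      exact Real.exp_lt_one_iff.2 (hM μ hμroot)
    exact_mod_cast (by exact_mod_cast this : ‖Complex.exp μ‖₊ < 1)
  -- Gelfand formula gives some power with small norm
  have htend := spectrum.pow_nnnorm_pow_one_div_tendsto_nhds_spectralRadius E
  obtain ⟨m₁, hm₁lt, hm₁1⟩ :=
    ((htend.eventually_lt_const hsr).and (Filter.eventually_ge_atTop 1)).exists
  have hm₁pos : (0 : ℝ) < m₁ := by exact_mod_cast hm₁1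
  have hclt : ‖E ^ m₁‖ < 1 := by
    by_contra hcon
    push_neg at hcon
    have h1 : (1 : ℝ≥0∞) ≤ (‖E ^ m₁‖₊ : ℝ≥0∞) := by
      exact_mod_cast (by exact_mod_cast hcon : (1 : ℝ≥0) ≤ ‖E ^ m₁‖₊)
    have h2 : (1 : ℝ≥0∞) ≤ (‖E ^ m₁‖₊ : ℝ≥0∞) ^ (1 / (m₁ : ℝ)) := by
      calc (1 : ℝ≥0∞) = (1 : ℝ≥0∞) ^ (1 / (m₁ : ℝ)) := (ENNReal.one_rpow _).symm
        _ ≤ _ := ENNReal.rpow_le_rpow h1 (by positivity)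
    exact absurd hm₁lt (not_lt.2 h2)
  set c := ‖E ^ m₁‖ with hc
  have hcpos : 0 < c := by
    rw [hc, norm_pos_iff]
    exact ((Matrix.isUnit_exp M).pow m₁).ne_zero
  set δ := -Real.log c / m₁ with hδ
  have hδpos : 0 < δ := by
    have : Real.log c < 0 := Real.log_neg hcpos hclt
    rw [hδ]
    exact div_pos (by linarith) hm₁pos
  set K := Real.exp ((m₁ : ℝ) * ‖M‖) with hK
  have hKpos : 0 < K := Real.exp_pos _
  refine ⟨K / c, by positivity, δ, hδpos, fun t ht a b => ?_⟩
  -- decompose t = q * m₁ + s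
  set q := ⌊t / (m₁ : ℝ)⌋₊ with hq
  set s := t - (q : ℝ) * m₁ with hs
  have hq_le : (q : ℝ) * m₁ ≤ t := by
    rw [hq]
    have := Nat.floor_le (by positivity : (0:ℝ) ≤ t / m₁)
    calc ((⌊t / (m₁ : ℝ)⌋₊ : ℝ)) * m₁ ≤ (t / m₁) * m₁ := by
          exact mul_le_mul_of_nonneg_right this (le_of_lt hm₁pos)
      _ = t := by field_simp
  have hs0 : 0 ≤ s := by rw [hs]; linarith
  have hs1 : s ≤ m₁ := by
    rw [hs]
    have h2 : t / m₁ < q + 1 := Nat.lt_floor_add_one _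
    have h3 : t < (q + 1) * m₁ := by
      rw [← div_lt_iff₀ hm₁pos] at *
      linarith [h2]
    nlinarith
  -- exp (t • M) = (E ^ m₁) ^ q * exp (s • M)
  have hsplit : NormedSpace.exp (t • M) = (E ^ m₁) ^ q * NormedSpace.exp (s • M) := by
    have ht' : t • M = ((q * m₁ : ℕ) : ℝ) • M + s • M := by
      rw [hs]
      push_cast
      module
    rw [ht', Matrix.exp_add_of_commute]
    · congr 1
      rw [Nat.cast_smul_eq_nsmul, Matrix.exp_nsmul, pow_mul']
    · exact (Commute.refl M).smul_left _ |>.smul_right _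
  have hnorm : ‖NormedSpace.exp (t • M)‖ ≤ c ^ q * K := by
    rw [hsplit]
    refine (norm_mul_le _ _).trans ?_
    refine mul_le_mul ?_ ?_ (norm_nonneg _) (by positivity)
    · exact norm_pow_le _ _
    · refine (norm_exp_le_exp_norm _).trans ?_
      rw [hK]
      apply Real.exp_le_exp.2
      rw [norm_smul, Real.norm_eq_abs, abs_of_nonneg hs0]
      exact mul_le_mul_of_nonneg_right hs1 (norm_nonneg M)
  have hcq : c ^ q ≤ Real.exp (-δ * t) / c := by
    have hlogc : Real.log c < 0 := Real.log_neg hcpos hclt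
    have h1 : (c : ℝ) ^ q = Real.exp ((q : ℝ) * Real.log c) := by
      rw [← Real.log_pow, Real.exp_log (by positivity)]
    rw [h1]
    have h2 : t / m₁ - 1 ≤ (q : ℝ) := by
      have := Nat.lt_floor_add_one (t / (m₁ : ℝ))
      rw [hq]
      linarith
    have h3 : (q : ℝ) * Real.log c ≤ (t / m₁ - 1) * Real.log c := by
      exact mul_le_mul_of_nonpos_right h2 (le_of_lt hlogc)
    refine (Real.exp_le_exp.2 h3).trans_eq ?_
    have hm₁ne : (m₁ : ℝ) ≠ 0 := hm₁pos.ne'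
    rw [show (t / (m₁ : ℝ) - 1) * Real.log c = -δ * t + (-Real.log c) by
      rw [hδ]; field_simp; ring]
    rw [Real.exp_add, Real.exp_neg, Real.exp_log hcpos]
    ring
  calc ‖NormedSpace.exp (t • M) a b‖ ≤ ‖NormedSpace.exp (t • M)‖ := hentry _ a b
    _ ≤ c ^ q * K := hnorm
    _ ≤ (Real.exp (-δ * t) / c) * K := mul_le_mul_of_nonneg_right hcq (le_of_lt hKpos)
    _ = K / c * Real.exp (-δ * t) := by ring

lemma map_exp_complex {N : ℕ} (A : Matrix (Fin N) (Fin N) ℝ) (t : ℝ) :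
    (NormedSpace.exp (t • A)).map (algebraMap ℝ ℂ) =
      NormedSpace.exp (t • A.map (algebraMap ℝ ℂ)) := by
  letI : NormedRing (Matrix (Fin N) (Fin N) ℝ) := Matrix.linftyOpNormedRing
  letI : NormedAlgebra ℝ (Matrix (Fin N) (Fin N) ℝ) := Matrix.linftyOpNormedAlgebra
  letI : NormedRing (Matrix (Fin N) (Fin N) ℂ) := Matrix.linftyOpNormedRing
  letI : NormedAlgebra ℝ (Matrix (Fin N) (Fin N) ℂ) := Matrix.linftyOpNormedAlgebra
  letI : NormedAlgebra ℚ (Matrix (Fin N) (Fin N) ℝ) := Matrix.linftyOpNormedAlgebra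
  letI : NormedAlgebra ℚ (Matrix (Fin N) (Fin N) ℂ) := Matrix.linftyOpNormedAlgebra
  have hcont : Continuous ((algebraMap ℝ ℂ).mapMatrix :
      Matrix (Fin N) (Fin N) ℝ →+* Matrix (Fin N) (Fin N) ℂ) := by
    apply continuous_matrix
    intro i j
    show Continuous fun X : Matrix (Fin N) (Fin N) ℝ => ((X i j : ℝ) : ℂ)
    exact Complex.continuous_ofReal.comp ((continuous_apply j).comp (continuous_apply i))
  have h1 := NormedSpace.map_exp ((algebraMap ℝ ℂ).mapMatrix :
      Matrix (Fin N) (Fin N) ℝ →+* Matrix (Fin N) (Fin N) ℂ) hcont (t • A)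
  have h2 : ((algebraMap ℝ ℂ).mapMatrix : Matrix (Fin N) (Fin N) ℝ →+* _) (t • A) =
      t • A.map (algebraMap ℝ ℂ) := by
    ext i j
    simp [RingHom.mapMatrix_apply, Matrix.map_apply, Complex.real_smul]
  rw [h2] at h1
  exact h1

theorem real_exp_entry_decay {N : ℕ} (A : Matrix (Fin N) (Fin N) ℝ) (hA : StableMat A) :
    ∃ C : ℝ, 0 < C ∧ ∃ δ : ℝ, 0 < δ ∧ ∀ t : ℝ, 0 ≤ t → ∀ a b : Fin N,
      |NormedSpace.exp (t • A) a b| ≤ C * Real.exp (-δ * t) := by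
  obtain ⟨C, hC, δ, hδ, hbound⟩ := exp_entry_decay (A.map (algebraMap ℝ ℂ)) hA
  refine ⟨C, hC, δ, hδ, fun t ht a b => ?_⟩
  have h1 : ((NormedSpace.exp (t • A) a b : ℝ) : ℂ) =
      NormedSpace.exp (t • A.map (algebraMap ℝ ℂ)) a b := by
    rw [← map_exp_complex]
    rfl
  have h2 := hbound t ht a b
  rw [← h1] at h2
  simpa using h2


open Filter in
lemma integrable_decay {g : ℝ → ℝ} (hg : Continuous g) {C δ : ℝ} (hδ : 0 < δ)
    (h : ∀ t : ℝ, 0 ≤ t → |g t| ≤ C * Real.exp (-δ * t)) :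
    MeasureTheory.IntegrableOn g (Set.Ioi 0) := by
  have hexp : MeasureTheory.IntegrableOn (fun t => C * Real.exp (-δ * t)) (Set.Ioi (0:ℝ)) :=
    (exp_neg_integrableOn_Ioi 0 hδ).const_mul C
  refine hexp.mono' (hg.aestronglyMeasurable.restrict) ?_
  rw [MeasureTheory.ae_restrict_iff' measurableSet_Ioi]
  filter_upwards with t ht
  rw [Real.norm_eq_abs]
  exact h t (le_of_lt ht)

/-- Entry picking as continuous linear map. -/
def entryCLM (N : ℕ) (p q : Fin N) : Matrix (Fin N) (Fin N) ℝ →L[ℝ] ℝ where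
  toLinearMap :=
    { toFun := fun X => X p q
      map_add' := fun X Y => rfl
      map_smul' := fun c X => rfl }
  cont := (continuous_apply q).comp (continuous_apply p)

variable {n k : ℕ}


end LPO

namespace LPO

open Filter

/-- If all eigenvalues of `A` have negative real part, then the
matrix-valued integral `∫₀^∞ exp(tA) ⊗ ⋯ ⊗ exp(tA) dt` converges (entrywise) and
`L_k(A)⁻¹ = -∫₀^∞ exp(tA) ⊗ ⋯ ⊗ exp(tA) dt`. -/
theorem LkMat_inv_eq_neg_integral
    {n k : ℕ} (hk : 1 ≤ k)
    (A : Matrix (Fin n) (Fin n) ℝ) (hA : StableMat A) :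
    (∀ p q : Fin (n ^ k),
      MeasureTheory.IntegrableOn
        (fun t : ℝ => mkron k (fun _ => NormedSpace.exp (t • A)) p q)
        (Set.Ioi 0)) ∧
    (LkMat A k)⁻¹ =
      -Matrix.of fun p q =>
        ∫ t in Set.Ioi (0 : ℝ), mkron k (fun _ => NormedSpace.exp (t • A)) p q := by
  classical
  set B := LkMat A k with hB
  obtain ⟨C, hC, δ, hδ, hbd⟩ := real_exp_entry_decay A hA
  -- rewrite the integrand
  have hmk : ∀ (t : ℝ) (p q : Fin (n ^ k)),
      mkron k (fun _ => NormedSpace.exp (t • A)) p q = NormedSpace.exp (t • B) p q := by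
    intro t p q
    rw [exp_smul_LkMat]
  -- entrywise bound for exp (t • B)
  have hFb : ∀ t : ℝ, 0 ≤ t → ∀ p q : Fin (n ^ k),
      |NormedSpace.exp (t • B) p q| ≤ C ^ k * Real.exp (-(k * δ) * t) := by
    intro t ht p q
    rw [← hmk t p q, mkron_apply, Finset.abs_prod]
    have h1 : ∀ i : Fin k, |NormedSpace.exp (t • A) (mi p i) (mi q i)| ≤
        C * Real.exp (-δ * t) := fun i => hbd t ht _ _
    calc (∏ i, |NormedSpace.exp (t • A) (mi p i) (mi q i)|)
        ≤ ∏ _i : Fin k, (C * Real.exp (-δ * t)) :=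
          Finset.prod_le_prod (fun i _ => abs_nonneg _) (fun i _ => h1 i)
      _ = (C * Real.exp (-δ * t)) ^ k := by
          rw [Finset.prod_const, Finset.card_univ, Fintype.card_fin]
      _ = C ^ k * Real.exp (-(k * δ) * t) := by
          rw [mul_pow, ← Real.exp_nat_mul]
          ring_nf
  have hkδ : 0 < (k : ℝ) * δ := by
    have : (0:ℝ) < k := by exact_mod_cast hk
    positivity
  -- continuity
  have hFcont : Continuous fun t : ℝ => NormedSpace.exp (t • B) := by
    letI : NormedRing (Matrix (Fin (n ^ k)) (Fin (n ^ k)) ℝ) := Matrix.linftyOpNormedRing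
    letI : NormedAlgebra ℝ (Matrix (Fin (n ^ k)) (Fin (n ^ k)) ℝ) := Matrix.linftyOpNormedAlgebra
    letI : NormedAlgebra ℚ (Matrix (Fin (n ^ k)) (Fin (n ^ k)) ℝ) := Matrix.linftyOpNormedAlgebra
    exact NormedSpace.exp_continuous.comp (continuous_id.smul continuous_const)
  have hcont : ∀ p q : Fin (n ^ k), Continuous fun t : ℝ => NormedSpace.exp (t • B) p q :=
    fun p q => (continuous_apply q).comp ((continuous_apply p).comp hFcont)
  have hFint : ∀ p q : Fin (n ^ k),
      MeasureTheory.IntegrableOn (fun t : ℝ => NormedSpace.exp (t • B) p q) (Set.Ioi 0) :=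
    fun p q => integrable_decay (hcont p q) hkδ (fun t ht => hFb t ht p q)
  have hmk_fun : ∀ p q : Fin (n ^ k),
      (fun t : ℝ => mkron k (fun _ => NormedSpace.exp (t • A)) p q) =
        fun t : ℝ => NormedSpace.exp (t • B) p q := fun p q => funext fun t => hmk t p q
  refine ⟨fun p q => by rw [hmk_fun p q]; exact hFint p q, ?_⟩
  -- the matrix of integrals
  set X : Matrix (Fin (n ^ k)) (Fin (n ^ k)) ℝ :=
    Matrix.of (fun p q => ∫ t in Set.Ioi (0:ℝ), NormedSpace.exp (t • B) p q) with hX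
  -- integrability of entries of B * exp(t • B)
  have hBFfun : ∀ p q : Fin (n ^ k), (fun t : ℝ => (B * NormedSpace.exp (t • B)) p q) =
      fun t : ℝ => ∑ r, B p r * NormedSpace.exp (t • B) r q :=
    fun p q => funext fun t => Matrix.mul_apply
  have hBF_int : ∀ p q : Fin (n ^ k),
      MeasureTheory.IntegrableOn
        (fun t : ℝ => (B * NormedSpace.exp (t • B)) p q) (Set.Ioi 0) := by
    intro p q
    rw [hBFfun p q]
    exact MeasureTheory.integrable_finset_sum _ (fun r _ => (hFint r q).const_mul _)
  -- derivative of entries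
  have hderiv : ∀ (p q : Fin (n ^ k)) (t : ℝ),
      HasDerivAt (fun u : ℝ => NormedSpace.exp (u • B) p q)
        ((B * NormedSpace.exp (t • B)) p q) t := by
    intro p q t
    letI : NormedRing (Matrix (Fin (n ^ k)) (Fin (n ^ k)) ℝ) := Matrix.linftyOpNormedRing
    letI : NormedAlgebra ℝ (Matrix (Fin (n ^ k)) (Fin (n ^ k)) ℝ) := Matrix.linftyOpNormedAlgebra
    have h := hasDerivAt_exp_smul_const' (𝕂 := ℝ) B t
    exact ((entryCLM (n ^ k) p q).hasFDerivAt.comp_hasDerivAt t h : _)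
  -- FTC on [0, T]
  have hFTC : ∀ (p q : Fin (n ^ k)) (T : ℝ),
      (∫ t in (0:ℝ)..T, (B * NormedSpace.exp (t • B)) p q) =
        NormedSpace.exp (T • B) p q - (1 : Matrix (Fin (n ^ k)) (Fin (n ^ k)) ℝ) p q := by
    intro p q T
    have hcont2 : Continuous fun t : ℝ => (B * NormedSpace.exp (t • B)) p q := by
      rw [hBFfun p q]
      exact continuous_finset_sum _ (fun r _ => continuous_const.mul (hcont r q))
    have := intervalIntegral.integral_eq_sub_of_hasDerivAt
      (f := fun u : ℝ => NormedSpace.exp (u • B) p q)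
      (f' := fun t : ℝ => (B * NormedSpace.exp (t • B)) p q)
      (a := 0) (b := T) (fun t _ => hderiv p q t) (hcont2.intervalIntegrable 0 T)
    rw [this]
    simp only [zero_smul, NormedSpace.exp_zero]
  -- limits
  have hlimF : ∀ p q : Fin (n ^ k),
      Tendsto (fun T : ℝ => NormedSpace.exp (T • B) p q) atTop (nhds 0) := by
    intro p q
    have hg : Tendsto (fun T : ℝ => C ^ k * Real.exp (-(k * δ) * T)) atTop (nhds 0) := by
      have h1 : Tendsto (fun T : ℝ => ((k : ℝ) * δ) * T) atTop atTop :=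
        Tendsto.const_mul_atTop hkδ tendsto_id
      have h2 : Tendsto (fun T : ℝ => Real.exp (-(((k : ℝ) * δ) * T))) atTop (nhds 0) :=
        Real.tendsto_exp_neg_atTop_nhds_zero.comp h1
      have h3 := h2.const_mul (C ^ k)
      rw [mul_zero] at h3
      convert h3 using 2 with T
      ring_nf
    refine squeeze_zero_norm' ?_ hg
    filter_upwards [eventually_ge_atTop (0:ℝ)] with T hT
    rw [Real.norm_eq_abs]
    exact hFb T hT p q
  -- the key identity on improper integrals
  have hkey : ∀ p q : Fin (n ^ k),
      (∫ t in Set.Ioi (0:ℝ), (B * NormedSpace.exp (t • B)) p q) =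
        -(1 : Matrix (Fin (n ^ k)) (Fin (n ^ k)) ℝ) p q := by
    intro p q
    have h1 := MeasureTheory.intervalIntegral_tendsto_integral_Ioi (0:ℝ)
      (hBF_int p q) tendsto_id
    have h2 : Tendsto (fun T : ℝ => NormedSpace.exp (T • B) p q -
        (1 : Matrix (Fin (n ^ k)) (Fin (n ^ k)) ℝ) p q) atTop
        (nhds (0 - (1 : Matrix (Fin (n ^ k)) (Fin (n ^ k)) ℝ) p q)) :=
      (hlimF p q).sub_const _
    have h3 : Tendsto (fun T : ℝ =>
        ∫ t in (0:ℝ)..(id T), (B * NormedSpace.exp (t • B)) p q) atTop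
        (nhds (0 - (1 : Matrix (Fin (n ^ k)) (Fin (n ^ k)) ℝ) p q)) := by
      refine h2.congr' ?_
      filter_upwards with T
      rw [← hFTC p q T]
      rfl
    have h4 := tendsto_nhds_unique h1 h3
    rw [h4]
    simp
  -- B * X = -1
  have hmul : B * X = -1 := by
    ext p q
    rw [Matrix.mul_apply]
    have h5 : ∀ r : Fin (n ^ k), B p r * X r q =
        ∫ t in Set.Ioi (0:ℝ), B p r * NormedSpace.exp (t • B) r q := by
      intro r
      rw [hX]
      simp only [Matrix.of_apply]
      rw [MeasureTheory.integral_const_mul]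
    simp_rw [h5]
    rw [← MeasureTheory.integral_finset_sum _ (fun r _ => (hFint r q).const_mul (B p r))]
    have h6 : ∀ t : ℝ, (∑ r, B p r * NormedSpace.exp (t • B) r q) =
        (B * NormedSpace.exp (t • B)) p q := fun t => (Matrix.mul_apply).symm
    simp_rw [h6]
    rw [hkey p q]
    simp
  have hinv : (LkMat A k)⁻¹ = -X := by
    refine Matrix.inv_eq_right_inv ?_
    rw [← hB, Matrix.mul_neg, hmul, neg_neg]
  rw [hinv]
  congr 1
  ext p q
  rw [hX]
  simp only [Matrix.of_apply]
  rw [hmk_fun p q]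


end LPO
end
end

section
/- Let n ≥ 1, d ≥ 2, R ≥ 1, let c_1 ∈ ℝ^n and c_i ∈ ℝ^{n^i} for i = 2,…,d with krank(c_i) ≤ R for all i = 2,…,d (with the convention c_i = 0 for i > d). For k ≥ 2 define C_k := − Σ_{i=1}^{k−1} c_i ⊗ c_{k−i} ∈ ℝ^{n^k}. Then krank(C_2) ≤ 1, and for every k ≥ 3 one has krank(C_k) ≤ (k−3) R² + 2R. -/
open Matrix MeasureTheory
open scoped BigOperators Nat RealInnerProductSpace

noncomputable section

namespace LPO


variable {n : ℕ}

lemma mi_ffe {k : ℕ} (f : Fin k → Fin n) : mi (finFunctionFinEquiv f) = f := by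
  simp [mi]

lemma krankLe_zero {k R : ℕ} (hk : k ≠ 0) : KrankLe (0 : Fin (n ^ k) → ℝ) R := by
  refine ⟨fun _ _ _ => 0, ?_⟩
  funext m
  simp [vkronFam, hk]

lemma krankLe_add {k R1 R2 : ℕ} {w1 w2 : Fin (n ^ k) → ℝ}
    (h1 : KrankLe w1 R1) (h2 : KrankLe w2 R2) : KrankLe (w1 + w2) (R1 + R2) := by
  obtain ⟨u, hu⟩ := h1
  obtain ⟨v, hv⟩ := h2
  refine ⟨fun j => Fin.addCases u v j, ?_⟩
  rw [hu, hv, Fin.sum_univ_add]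
  simp

lemma krankLe_smul {k R : ℕ} {w : Fin (n ^ k) → ℝ} (a : ℝ) (hk : k ≠ 0)
    (h : KrankLe w R) : KrankLe (a • w) R := by
  obtain ⟨u, hu⟩ := h
  have hpos : 0 < k := Nat.pos_of_ne_zero hk
  refine ⟨fun j i => (if i = (⟨0, hpos⟩ : Fin k) then a else 1) • u j i, ?_⟩
  funext m
  have key : ∀ j : Fin R,
      (∏ i, (if i = (⟨0, hpos⟩ : Fin k) then a else 1) * u j i (mi m i))
        = a * ∏ i, u j i (mi m i) := by
    intro j
    rw [Finset.prod_mul_distrib, Finset.prod_ite_eq' Finset.univ _ (fun _ => a)]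
    simp
  simp only [vkronFam, Pi.smul_apply, smul_eq_mul, hu, Finset.sum_apply, Finset.mul_sum]
  exact Finset.sum_congr rfl fun j _ => (key j).symm

lemma krankLe_neg {k R : ℕ} {w : Fin (n ^ k) → ℝ} (hk : k ≠ 0)
    (h : KrankLe w R) : KrankLe (-w) R := by
  simpa using krankLe_smul (-1) hk h

lemma krankLe_sum {ι : Type*} {k : ℕ} (hk : k ≠ 0) (s : Finset ι)
    (f : ι → Fin (n ^ k) → ℝ) (r : ι → ℕ)
    (h : ∀ i ∈ s, KrankLe (f i) (r i)) :
    KrankLe (∑ i ∈ s, f i) (∑ i ∈ s, r i) := by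
  classical
  induction s using Finset.cons_induction with
  | empty => simpa using krankLe_zero (n := n) (R := 0) hk
  | cons a s ha ih =>
    rw [Finset.sum_cons, Finset.sum_cons]
    exact krankLe_add (h a (by simp)) (ih fun i hi => h i (by simp [hi]))

lemma krankLe_one (w : Fin (n ^ 1) → ℝ) : KrankLe w 1 := by
  refine ⟨fun _ _ x => w (finFunctionFinEquiv fun _ => x), ?_⟩
  funext m
  simp only [Fin.sum_univ_one, vkronFam, Fin.prod_univ_one]
  congr 1
  have : (fun _ : Fin 1 => mi m 0) = mi m := by
    funext i
    have : i = 0 := Subsingleton.elim _ _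
    rw [this]
  rw [this]
  simp [mi]

lemma krankLe_vkron {a b R1 R2 : ℕ} {u : Fin (n ^ a) → ℝ} {v : Fin (n ^ b) → ℝ}
    (h1 : KrankLe u R1) (h2 : KrankLe v R2) :
    KrankLe (vkron u v) (R1 * R2) := by
  obtain ⟨p, hp⟩ := h1
  obtain ⟨q, hq⟩ := h2
  refine ⟨fun j => Fin.append (p (finProdFinEquiv.symm j).1) (q (finProdFinEquiv.symm j).2), ?_⟩
  funext m
  have hsum : ∀ F : Fin (R1 * R2) → ℝ,
      ∑ j, F j = ∑ j1 : Fin R1, ∑ j2 : Fin R2, F (finProdFinEquiv (j1, j2)) := by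
    intro F
    rw [← finProdFinEquiv.sum_comp F, Fintype.sum_prod_type]
  simp only [Finset.sum_apply]
  rw [hsum]
  simp only [Equiv.symm_apply_apply]
  rw [vkron, hp, hq]
  simp only [Finset.sum_apply, Finset.sum_mul_sum]
  refine Finset.sum_congr rfl fun j1 _ => Finset.sum_congr rfl fun j2 _ => ?_
  simp only [vkronFam, mi_ffe, Fin.prod_univ_add, Fin.addCases_left, Fin.addCases_right]
  congr 1 <;> refine Finset.prod_congr rfl fun i _ => ?_
  · rw [Fin.append_left]
  · rw [Fin.append_right]

lemma krankLe_vcast {a b R : ℕ} (h : a = b) {w : Fin (n ^ a) → ℝ}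
    (hw : KrankLe w R) : KrankLe (vcast h w) R := by
  subst h
  have : vcast rfl w = w := by
    funext m
    exact congrArg w (Fin.ext rfl)
  rwa [show vcast (n := n) rfl w = w from this]

end LPO

namespace LPO

lemma krankLe_mono {n k R R' : ℕ} {w : Fin (n ^ k) → ℝ} (hk : k ≠ 0)
    (h : KrankLe w R) (hRR : R ≤ R') : KrankLe w R' := by
  have := krankLe_add h (krankLe_zero (n := n) (R := R' - R) hk)
  simpa [Nat.add_sub_cancel' hRR] using this

/-- If `krank(c_i) ≤ R` for `i = 2,…,d` (and `c_i = 0` for `i > d`),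
then the right-hand side `C_k = -Σ_{i=1}^{k-1} c_i ⊗ c_{k-i}` satisfies
`krank(C_2) ≤ 1` and `krank(C_k) ≤ (k-3)R² + 2R` for all `k ≥ 3`. -/
theorem krank_Cvec_bound
    {n d R : ℕ} (hn : 1 ≤ n) (hd : 2 ≤ d) (hR : 1 ≤ R)
    (c : (i : ℕ) → Fin (n ^ i) → ℝ) (hc0 : ∀ i, d < i → c i = 0)
    (hcR : ∀ i, 2 ≤ i → i ≤ d → KrankLe (c i) R) :
    KrankLe (Cvec c 2) 1 ∧
      ∀ k, 3 ≤ k → KrankLe (Cvec c k) ((k - 3) * R ^ 2 + 2 * R) := by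
  have hc1 : KrankLe (c 1) 1 := krankLe_one _
  have hAll : ∀ i, 2 ≤ i → KrankLe (c i) R := by
    intro i hi
    by_cases hid : i ≤ d
    · exact hcR i hi hid
    · rw [hc0 i (by omega)]
      exact krankLe_zero (by omega)
  have hAll' : ∀ i, 1 ≤ i → KrankLe (c i) (if i = 1 then 1 else R) := by
    intro i hi
    by_cases h : i = 1
    · subst h
      simpa using hc1
    · rw [if_neg h]
      exact hAll i (by omega)
  constructor
  · -- k = 2
    rw [Cvec]
    refine krankLe_neg (by norm_num) ?_
    have key := krankLe_sum (n := n) (k := 2) (by norm_num)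
      ((Finset.Icc 1 (2 - 1)).attach)
      (fun i => vcast (show i.1 + (2 - i.1) = 2 from by
          have := Finset.mem_Icc.mp i.2; omega)
        (vkron (c i.1) (c (2 - i.1))))
      (fun _ => 1)
      (fun i _ => by
        have hi := Finset.mem_Icc.mp i.2
        have h1 : i.1 = 1 := by omega
        refine krankLe_vcast _
          (krankLe_mono (by omega)
            (krankLe_vkron (hAll' i.1 (by omega)) (hAll' (2 - i.1) (by omega))) ?_)
        simp [h1])
    simpa using key
  · intro k hk
    rw [Cvec]
    refine krankLe_neg (by omega) ?_
    have key := krankLe_sum (n := n) (k := k) (by omega)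
      ((Finset.Icc 1 (k - 1)).attach)
      (fun i => vcast (show i.1 + (k - i.1) = k from by
          have := Finset.mem_Icc.mp i.2; omega)
        (vkron (c i.1) (c (k - i.1))))
      (fun i => if i.1 = 1 ∨ i.1 = k - 1 then R else R ^ 2)
      (fun i _ => by
        have hi := Finset.mem_Icc.mp i.2
        refine krankLe_vcast _
          (krankLe_mono (by omega)
            (krankLe_vkron (hAll' i.1 (by omega)) (hAll' (k - i.1) (by omega))) ?_)
        by_cases h1 : i.1 = 1
        · rw [if_pos (Or.inl h1), if_pos h1, one_mul,
            if_neg (show k - i.1 ≠ 1 from by omega)]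
        · by_cases h2 : i.1 = k - 1
          · rw [if_pos (Or.inr h2), if_neg h1,
              if_pos (show k - i.1 = 1 from by omega), mul_one]
          · rw [if_neg (not_or.mpr ⟨h1, h2⟩), if_neg h1,
              if_neg (show k - i.1 ≠ 1 from by omega), pow_two])
    have hsum : (∑ i ∈ (Finset.Icc 1 (k - 1)).attach,
        if i.1 = 1 ∨ i.1 = k - 1 then R else R ^ 2)
        = (k - 3) * R ^ 2 + 2 * R := by
      rw [Finset.sum_attach _ (fun i => if i = 1 ∨ i = k - 1 then R else R ^ 2)]
      have hset : Finset.Icc 1 (k - 1)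
          = insert 1 (insert (k - 1) (Finset.Icc 2 (k - 2))) := by
        ext x
        simp only [Finset.mem_Icc, Finset.mem_insert]
        omega
      rw [hset, Finset.sum_insert (by simp only [Finset.mem_insert, Finset.mem_Icc]; omega),
        Finset.sum_insert (by simp only [Finset.mem_Icc]; omega)]
      rw [if_pos (Or.inl rfl), if_pos (Or.inr rfl)]
      rw [Finset.sum_congr rfl (fun x hx => by
        have := Finset.mem_Icc.mp hx
        rw [if_neg (by omega)])]
      rw [Finset.sum_const, Nat.card_Icc,
        show k - 2 + 1 - 2 = k - 3 from by omega, smul_eq_mul]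
      ring
    rw [hsum] at key
    exact key


end LPO
end
end

section
/- Let P, W ∈ ℝ^{n×n} be symmetric positive definite, let R ∈ ℝ^{n×n} be invertible with P = R R^⊤, let U ∈ ℝ^{n×n} be orthogonal and Σ ∈ ℝ^{n×n} diagonal with positive diagonal entries such that R^⊤ W R = U Σ² U^⊤. Then the matrix T := Σ^{1/2} U^⊤ R^{-1} is invertible and simultaneously diagonalizes P and W in the balancing sense: T P T^⊤ = Σ and T^{-⊤} W T^{-1} = Σ. -/
open Matrix MeasureTheory
open scoped BigOperators Nat RealInnerProductSpace

noncomputable section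

namespace LPO

/-- The balancing transformation `T = Σ^{1/2} Uᵀ R⁻¹` is invertible and
simultaneously diagonalizes `P` and `W`: `T P Tᵀ = Σ` and `T⁻ᵀ W T⁻¹ = Σ`. -/
theorem balancing_transformation
    {n : ℕ} (P W R U : Matrix (Fin n) (Fin n) ℝ) (σ : Fin n → ℝ)
    (hP : P.PosDef) (hW : W.PosDef) (hR : IsUnit R.det)
    (hPR : P = R * Rᵀ) (hU : Uᵀ * U = 1) (hσ : ∀ i, 0 < σ i)
    (hWR : Rᵀ * W * R = U * Matrix.diagonal (fun i => σ i ^ 2) * Uᵀ) :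
    IsUnit (Matrix.diagonal (fun i => Real.sqrt (σ i)) * Uᵀ * R⁻¹).det ∧
    (Matrix.diagonal (fun i => Real.sqrt (σ i)) * Uᵀ * R⁻¹) * P *
        (Matrix.diagonal (fun i => Real.sqrt (σ i)) * Uᵀ * R⁻¹)ᵀ
      = Matrix.diagonal σ ∧
    ((Matrix.diagonal (fun i => Real.sqrt (σ i)) * Uᵀ * R⁻¹)⁻¹)ᵀ * W *
        (Matrix.diagonal (fun i => Real.sqrt (σ i)) * Uᵀ * R⁻¹)⁻¹
      = Matrix.diagonal σ := by
  set D : Matrix (Fin n) (Fin n) ℝ := Matrix.diagonal (fun i => Real.sqrt (σ i)) with hD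
  have hUdet : IsUnit U.det := by
    have := congrArg Matrix.det hU
    rw [Matrix.det_mul, Matrix.det_one, Matrix.det_transpose] at this
    exact IsUnit.of_mul_eq_one _ this
  have hUT : U * Uᵀ = 1 := mul_eq_one_comm.mp hU
  have hDdet : IsUnit D.det := by
    rw [hD, Matrix.det_diagonal]
    refine (Finset.prod_ne_zero_iff.mpr fun i _ =>
      ne_of_gt (Real.sqrt_pos.mpr (hσ i))).isUnit
  have hUTdet : IsUnit Uᵀ.det := by rwa [Matrix.det_transpose]
  have hRinvdet : IsUnit R⁻¹.det := R.isUnit_nonsing_inv_det hR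
  have hTdet : IsUnit (D * Uᵀ * R⁻¹).det := by
    rw [Matrix.det_mul, Matrix.det_mul]
    exact (hDdet.mul hUTdet).mul hRinvdet
  refine ⟨hTdet, ?_, ?_⟩
  · have hRR : R⁻¹ * R = 1 := Matrix.nonsing_inv_mul _ hR
    have hRT : Rᵀ * R⁻¹ᵀ = 1 := by
      rw [Matrix.transpose_nonsing_inv,
        Matrix.mul_nonsing_inv _ (by rwa [Matrix.det_transpose])]
    calc (D * Uᵀ * R⁻¹) * P * (D * Uᵀ * R⁻¹)ᵀ
        = D * Uᵀ * (R⁻¹ * R) * (Rᵀ * R⁻¹ᵀ) * (Uᵀᵀ * Dᵀ) := by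
          rw [hPR]; simp only [Matrix.transpose_mul, Matrix.mul_assoc]
      _ = D * (Uᵀ * U) * D := by
          rw [hRR, hRT, Matrix.transpose_transpose, hD, Matrix.diagonal_transpose]
          simp only [Matrix.mul_one, Matrix.one_mul, Matrix.mul_assoc]
      _ = Matrix.diagonal σ := by
          rw [hU, Matrix.mul_one, hD, Matrix.diagonal_mul_diagonal]
          have h2 : (fun i => Real.sqrt (σ i) * Real.sqrt (σ i)) = σ :=
            funext fun i => Real.mul_self_sqrt (hσ i).le
          rw [h2]
  · have hDinv : D⁻¹ = Matrix.diagonal (fun i => (Real.sqrt (σ i))⁻¹) := by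
      apply Matrix.inv_eq_right_inv
      rw [hD, Matrix.diagonal_mul_diagonal]
      have h3 : (fun i => Real.sqrt (σ i) * (Real.sqrt (σ i))⁻¹) = fun _ => (1 : ℝ) :=
        funext fun i => mul_inv_cancel₀ (ne_of_gt (Real.sqrt_pos.mpr (hσ i)))
      rw [h3, Matrix.diagonal_one]
    have hTinv : (D * Uᵀ * R⁻¹)⁻¹ = R * U * D⁻¹ := by
      apply Matrix.inv_eq_right_inv
      calc D * Uᵀ * R⁻¹ * (R * U * D⁻¹)
          = D * (Uᵀ * ((R⁻¹ * R) * U)) * D⁻¹ := by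
            simp only [Matrix.mul_assoc]
        _ = 1 := by
            rw [Matrix.nonsing_inv_mul _ hR, Matrix.one_mul, hU, Matrix.mul_one,
              Matrix.mul_nonsing_inv _ hDdet]
    rw [hTinv]
    have hDinvT : (R * U * D⁻¹)ᵀ = D⁻¹ * Uᵀ * Rᵀ := by
      simp only [Matrix.transpose_mul, hDinv, Matrix.diagonal_transpose, Matrix.mul_assoc]
    calc (R * U * D⁻¹)ᵀ * W * (R * U * D⁻¹)
        = D⁻¹ * (Uᵀ * ((Rᵀ * W * R) * U)) * D⁻¹ := by
          rw [hDinvT]; simp only [Matrix.mul_assoc]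
      _ = D⁻¹ * ((Uᵀ * U) * Matrix.diagonal (fun i => σ i ^ 2) * (Uᵀ * U)) * D⁻¹ := by
          rw [hWR]; simp only [Matrix.mul_assoc]
      _ = D⁻¹ * Matrix.diagonal (fun i => σ i ^ 2) * D⁻¹ := by
          rw [hU]; simp only [Matrix.one_mul, Matrix.mul_one, Matrix.mul_assoc]
      _ = Matrix.diagonal σ := by
          rw [hDinv, Matrix.diagonal_mul_diagonal, Matrix.diagonal_mul_diagonal]
          have h4 : (fun i => (Real.sqrt (σ i))⁻¹ * σ i ^ 2 * (Real.sqrt (σ i))⁻¹) = σ := by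
            funext i
            have hs : Real.sqrt (σ i) ≠ 0 := ne_of_gt (Real.sqrt_pos.mpr (hσ i))
            have key : σ i = Real.sqrt (σ i) * Real.sqrt (σ i) :=
              (Real.mul_self_sqrt (hσ i).le).symm
            rw [sq, key]
            field_simp
            rw [Real.sqrt_sq (Real.sqrt_nonneg _)]
          rw [h4]


end LPO
end
end

section
/- Let A ∈ ℝ^{n×n}, B ∈ ℝ^{n×m}, and let P ∈ ℝ^{n×n} be symmetric, invertible, and satisfy the Lyapunov equation A P + P A^⊤ + B B^⊤ = 0. Then the quadratic function E_c(x) = (1/2) x^⊤ P^{-1} x satisfies the Hamilton–Jacobi PDE: for every x ∈ ℝ^n, x^⊤ P^{-1} A x + (1/2) ‖B^⊤ P^{-1} x‖² = 0; equivalently, (∇E_c(x))^⊤ A x + (1/2) (∇E_c(x))^⊤ B B^⊤ ∇E_c(x) = 0 for all x, where ∇E_c(x) = P^{-1} x. -/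
open Matrix MeasureTheory
open scoped BigOperators Nat RealInnerProductSpace

noncomputable section

namespace LPO

/-- If `P` is symmetric, invertible and solves
`AP + PAᵀ + BBᵀ = 0`, then `E_c(x) = (1/2) xᵀ P⁻¹ x` solves the Hamilton–Jacobi PDE:
`xᵀ P⁻¹ A x + (1/2)‖Bᵀ P⁻¹ x‖² = 0`; equivalently, with `∇E_c(x) = P⁻¹x`,
`(∇E_c(x))ᵀ A x + (1/2)(∇E_c(x))ᵀ B Bᵀ ∇E_c(x) = 0`. -/
theorem controllability_energy_solves_hjb
    {n m : ℕ} (A : Matrix (Fin n) (Fin n) ℝ) (B : Matrix (Fin n) (Fin m) ℝ)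
    (P : Matrix (Fin n) (Fin n) ℝ) (hPsymm : P.IsSymm) (hPinv : IsUnit P.det)
    (hlyap : A * P + P * Aᵀ + B * Bᵀ = 0) :
    ∀ x : Fin n → ℝ,
      x ⬝ᵥ ((P⁻¹ * A) *ᵥ x) +
          (1 / 2) * ((Bᵀ *ᵥ (P⁻¹ *ᵥ x)) ⬝ᵥ (Bᵀ *ᵥ (P⁻¹ *ᵥ x))) = 0 ∧
      (P⁻¹ *ᵥ x) ⬝ᵥ (A *ᵥ x) +
          (1 / 2) * ((P⁻¹ *ᵥ x) ⬝ᵥ ((B * Bᵀ) *ᵥ (P⁻¹ *ᵥ x))) = 0 := by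
  intro x
  have dp : ∀ {a b : ℕ} (M : Matrix (Fin a) (Fin b) ℝ) (v : Fin a → ℝ) (w : Fin b → ℝ),
      v ⬝ᵥ (M *ᵥ w) = (Mᵀ *ᵥ v) ⬝ᵥ w := by
    intro a b M v w
    rw [Matrix.mulVec_transpose, Matrix.dotProduct_mulVec]
  have hPi : (P⁻¹)ᵀ = P⁻¹ := by
    rw [Matrix.transpose_nonsing_inv, hPsymm.eq]
  have hPP : P * P⁻¹ = 1 := Matrix.mul_nonsing_inv P hPinv
  have hPP' : P⁻¹ * P = 1 := Matrix.nonsing_inv_mul P hPinv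
  have key : P⁻¹ * A + Aᵀ * P⁻¹ + P⁻¹ * (B * Bᵀ) * P⁻¹ = 0 := by
    have h1 : P⁻¹ * (A * P + P * Aᵀ + B * Bᵀ) * P⁻¹ = 0 := by
      rw [hlyap]; simp
    have h2 : P⁻¹ * (A * P + P * Aᵀ + B * Bᵀ) * P⁻¹
        = P⁻¹ * A * (P * P⁻¹) + P⁻¹ * P * (Aᵀ * P⁻¹) + P⁻¹ * (B * Bᵀ) * P⁻¹ := by
      noncomm_ring
    rw [h2, hPP, hPP', mul_one, one_mul] at h1
    exact h1
  have hmain : x ⬝ᵥ ((P⁻¹ * A + Aᵀ * P⁻¹ + P⁻¹ * (B * Bᵀ) * P⁻¹) *ᵥ x) = 0 := by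
    rw [key]; simp
  have hsym : x ⬝ᵥ ((Aᵀ * P⁻¹) *ᵥ x) = x ⬝ᵥ ((P⁻¹ * A) *ᵥ x) := by
    rw [dp, Matrix.transpose_mul, hPi, Matrix.transpose_transpose, dotProduct_comm]
  have h2 : (P⁻¹ * (B * Bᵀ) * P⁻¹) *ᵥ x = P⁻¹ *ᵥ (B *ᵥ (Bᵀ *ᵥ (P⁻¹ *ᵥ x))) := by
    rw [← Matrix.mulVec_mulVec, ← Matrix.mulVec_mulVec, ← Matrix.mulVec_mulVec]
  have hBB : x ⬝ᵥ ((P⁻¹ * (B * Bᵀ) * P⁻¹) *ᵥ x)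
      = (Bᵀ *ᵥ (P⁻¹ *ᵥ x)) ⬝ᵥ (Bᵀ *ᵥ (P⁻¹ *ᵥ x)) := by
    rw [h2, dp P⁻¹, hPi, dp B]
  rw [Matrix.add_mulVec, Matrix.add_mulVec, dotProduct_add, dotProduct_add, hsym, hBB] at hmain
  have e1 : x ⬝ᵥ ((P⁻¹ * A) *ᵥ x) + (1 / 2) * ((Bᵀ *ᵥ (P⁻¹ *ᵥ x)) ⬝ᵥ (Bᵀ *ᵥ (P⁻¹ *ᵥ x))) = 0 := by
    linarith
  refine ⟨e1, ?_⟩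
  have e2a : x ⬝ᵥ ((P⁻¹ * A) *ᵥ x) = (P⁻¹ *ᵥ x) ⬝ᵥ (A *ᵥ x) := by
    rw [← Matrix.mulVec_mulVec, dp P⁻¹, hPi]
  have e2b : (P⁻¹ *ᵥ x) ⬝ᵥ ((B * Bᵀ) *ᵥ (P⁻¹ *ᵥ x))
      = (Bᵀ *ᵥ (P⁻¹ *ᵥ x)) ⬝ᵥ (Bᵀ *ᵥ (P⁻¹ *ᵥ x)) := by
    rw [← Matrix.mulVec_mulVec, dp B]
  rw [← e2a, e2b]; exact e1

end LPO
end
end
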